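/- Let K : ℝ → ℝ be continuous, let f₁ : ℝ → ℝ be twice differentiable with f₁''(t) + K(t)·f₁(t) = 0 for all t, f₁(0) = 1 and f₁'(0) = 0. Let t₀ > 0 and suppose f₁(s) ≠ 0 for all s ∈ [0, t₀), f₁(t₀) = 0 and f₁'(t₀) ≠ 0. Then the function t ↦ f₁(t)·∫₀ᵗ f₁(s)⁻² ds tends to −1/f₁'(t₀) as t → t₀ from the left. -/

import Mathlib

/-- The reduction-of-order formula `t ↦ f₁ t * ∫₀ᵗ f₁(s)⁻² ds`
has a removable singularity at a simple zero `t₀` of `f₁`: it tends to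
`-1/f₁'(t₀)` as `t → t₀⁻`. -/
theorem stmt_3 (K f₁ : ℝ → ℝ) (hK : Continuous K)
    (hf : Differentiable ℝ f₁) (hf' : Differentiable ℝ (deriv f₁))
    (hode : ∀ t, deriv (deriv f₁) t + K t * f₁ t = 0)
    (h0 : f₁ 0 = 1) (h0' : deriv f₁ 0 = 0)
    (t₀ : ℝ) (ht₀ : 0 < t₀)
    (hne : ∀ s ∈ Set.Ico (0 : ℝ) t₀, f₁ s ≠ 0)
    (hz : f₁ t₀ = 0) (hz' : deriv f₁ t₀ ≠ 0) :
    Filter.Tendsto (fun t => f₁ t * ∫ s in (0 : ℝ)..t, ((f₁ s) ^ 2)⁻¹)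
      (nhdsWithin t₀ (Set.Iio t₀)) (nhds (-(1 / deriv f₁ t₀))) := by
  have cf : Continuous f₁ := hf.continuous
  have cf' : Continuous (deriv f₁) := hf'.continuous
  obtain ⟨ε, hε, hball⟩ := Metric.eventually_nhds_iff.mp
    (cf'.continuousAt.eventually_ne hz')
  set δ : ℝ := min (ε/2) (t₀/2) with hδdef
  have hδε : δ ≤ ε/2 := min_le_left _ _
  have hδt : δ ≤ t₀/2 := min_le_right _ _
  have hδ : 0 < δ := lt_min (by linarith) (by linarith)
  set a : ℝ := t₀ - δ with hadef
  set b : ℝ := t₀ + δ with hbdef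
  have ha0 : 0 < a := by simp only [hadef]; linarith
  have hat : a < t₀ := by simp only [hadef]; linarith
  have htb : t₀ < b := by simp only [hbdef]; linarith
  have hderiv_ne : ∀ s, a ≤ s → s ≤ b → deriv f₁ s ≠ 0 := by
    intro s h1 h2
    apply hball
    rw [Real.dist_eq, abs_lt]
    constructor <;> [simp only [hadef] at h1; simp only [hbdef] at h2] <;> linarith
  set v : ℝ → ℝ := fun s => K s * ((deriv f₁ s)^2)⁻¹ with hvdef
  set w : ℝ → ℝ := fun s => ((f₁ s)^2)⁻¹ - v s with hwdef
  set φ : ℝ → ℝ := fun s => -(f₁ s * deriv f₁ s)⁻¹ with hφdef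
  -- derivative of φ
  have hφd : ∀ s, f₁ s ≠ 0 → deriv f₁ s ≠ 0 → HasDerivAt φ (w s) s := by
    intro s h1 h2
    have hp : HasDerivAt (fun x => f₁ x * deriv f₁ x)
        (deriv f₁ s * deriv f₁ s + f₁ s * deriv (deriv f₁) s) s :=
      ((hf s).hasDerivAt).mul ((hf' s).hasDerivAt)
    have h3 := (hp.inv (mul_ne_zero h1 h2)).neg
    refine h3.congr_deriv ?_
    symm
    have h'' : deriv (deriv f₁) s = -(K s * f₁ s) := by linarith [hode s]
    rw [h'', hwdef, hvdef]
    field_simp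
    ring
  -- continuity of v on [a,b]
  have hvcont : ContinuousOn v (Set.Icc a b) := by
    intro s hs
    exact ((hK.continuousAt.mul
      (((cf'.pow 2).continuousAt).inv₀
        (pow_ne_zero 2 (hderiv_ne s hs.1 hs.2))))).continuousWithinAt
  -- key identity on (a, t₀)
  have key : ∀ t ∈ Set.Ioo a t₀,
      f₁ t * ∫ s in (0:ℝ)..t, ((f₁ s)^2)⁻¹
        = f₁ t * ((∫ s in (0:ℝ)..a, ((f₁ s)^2)⁻¹) - φ a + ∫ s in a..t, v s)
            - (deriv f₁ t)⁻¹ := by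
    intro t ht
    have hta : a ≤ t := ht.1.le
    have htt : t < t₀ := ht.2
    have hIcc1 : Set.uIcc (0:ℝ) a = Set.Icc 0 a := Set.uIcc_of_le ha0.le
    have hIcc2 : Set.uIcc a t = Set.Icc a t := Set.uIcc_of_le hta
    have hI1 : IntervalIntegrable (fun s => ((f₁ s)^2)⁻¹) MeasureTheory.volume 0 a := by
      apply ContinuousOn.intervalIntegrable
      intro s hs
      rw [hIcc1] at hs
      have hs0 : f₁ s ≠ 0 := hne s ⟨hs.1, lt_of_le_of_lt hs.2 hat⟩
      exact (((cf.pow 2).continuousAt).inv₀ (pow_ne_zero 2 hs0)).continuousWithinAt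
    have hI2 : IntervalIntegrable (fun s => ((f₁ s)^2)⁻¹) MeasureTheory.volume a t := by
      apply ContinuousOn.intervalIntegrable
      intro s hs
      rw [hIcc2] at hs
      have hs0 : f₁ s ≠ 0 := hne s ⟨le_trans ha0.le hs.1, lt_of_le_of_lt hs.2 htt⟩
      exact (((cf.pow 2).continuousAt).inv₀ (pow_ne_zero 2 hs0)).continuousWithinAt
    have hIv : IntervalIntegrable v MeasureTheory.volume a t := by
      apply ContinuousOn.intervalIntegrable
      rw [hIcc2]
      exact hvcont.mono (Set.Icc_subset_Icc le_rfl (by linarith))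
    have hIw : IntervalIntegrable w MeasureTheory.volume a t := hI2.sub hIv
    have split := intervalIntegral.integral_add_adjacent_intervals hI1 hI2
    have hw : (∫ s in a..t, w s) = φ t - φ a := by
      apply intervalIntegral.integral_eq_sub_of_hasDerivAt _ hIw
      intro s hs
      rw [hIcc2] at hs
      exact hφd s (hne s ⟨le_trans ha0.le hs.1, lt_of_le_of_lt hs.2 htt⟩)
        (hderiv_ne s hs.1 (by linarith [hs.2]))
    have hsum : (∫ s in a..t, ((f₁ s)^2)⁻¹)
        = (∫ s in a..t, w s) + ∫ s in a..t, v s := by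
      rw [← intervalIntegral.integral_add hIw hIv]
      congr 1
      funext s
      simp [hwdef]
    have hft : f₁ t ≠ 0 := hne t ⟨le_trans ha0.le hta, htt⟩
    have hf't : deriv f₁ t ≠ 0 := hderiv_ne t hta (by linarith)
    have hφt : f₁ t * φ t = -(deriv f₁ t)⁻¹ := by
      simp only [hφdef]
      rw [mul_inv]
      field_simp
    rw [← split, hsum, hw]
    linear_combination hφt
  -- eventual equality
  have hmem : Set.Ioo a t₀ ∈ nhdsWithin t₀ (Set.Iio t₀) :=
    Ioo_mem_nhdsLT_of_mem ⟨hat, le_rfl⟩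
  have heq : (fun t => f₁ t * ((∫ s in (0:ℝ)..a, ((f₁ s)^2)⁻¹) - φ a
        + ∫ s in a..t, v s) - (deriv f₁ t)⁻¹)
      =ᶠ[nhdsWithin t₀ (Set.Iio t₀)]
      (fun t => f₁ t * ∫ s in (0:ℝ)..t, ((f₁ s)^2)⁻¹) := by
    filter_upwards [hmem] with t ht
    exact (key t ht).symm
  -- limits
  have T1 : Filter.Tendsto f₁ (nhdsWithin t₀ (Set.Iio t₀)) (nhds 0) := by
    rw [← hz]
    exact (cf.tendsto t₀).mono_left nhdsWithin_le_nhds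
  have hIvab : IntervalIntegrable v MeasureTheory.volume a b := by
    apply ContinuousOn.intervalIntegrable
    rwa [Set.uIcc_of_le (by linarith : a ≤ b)]
  have hprim : ContinuousOn (fun x => ∫ s in a..x, v s) (Set.Icc a b) := by
    rw [← Set.uIcc_of_le (by linarith : a ≤ b)]
    apply intervalIntegral.continuousOn_primitive_interval
    rw [Set.uIcc_of_le (by linarith : a ≤ b)]
    exact hvcont.integrableOn_Icc
  have T2 : Filter.Tendsto (fun t => ∫ s in a..t, v s) (nhdsWithin t₀ (Set.Iio t₀))
      (nhds (∫ s in a..t₀, v s)) := by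
    have hct : ContinuousWithinAt (fun x => ∫ s in a..x, v s) (Set.Icc a b) t₀ :=
      hprim t₀ ⟨hat.le, htb.le⟩
    apply hct.tendsto.mono_left
    rw [nhdsWithin_le_iff]
    apply Filter.mem_of_superset (Filter.inter_mem hmem self_mem_nhdsWithin)
    intro x hx
    exact ⟨hx.1.1.le, le_trans hx.2.le (by linarith)⟩
  have T3 : Filter.Tendsto (fun t => (deriv f₁ t)⁻¹) (nhdsWithin t₀ (Set.Iio t₀))
      (nhds ((deriv f₁ t₀)⁻¹)) :=
    (((cf'.tendsto t₀).mono_left nhdsWithin_le_nhds).inv₀ hz')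
  have Tall : Filter.Tendsto
      (fun t => f₁ t * ((∫ s in (0:ℝ)..a, ((f₁ s)^2)⁻¹) - φ a
        + ∫ s in a..t, v s) - (deriv f₁ t)⁻¹)
      (nhdsWithin t₀ (Set.Iio t₀))
      (nhds (0 * ((∫ s in (0:ℝ)..a, ((f₁ s)^2)⁻¹) - φ a + ∫ s in a..t₀, v s)
        - (deriv f₁ t₀)⁻¹)) :=
    (T1.mul (Filter.Tendsto.add tendsto_const_nhds T2)).sub T3
  have : (0 : ℝ) * ((∫ s in (0:ℝ)..a, ((f₁ s)^2)⁻¹) - φ a + ∫ s in a..t₀, v s)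
      - (deriv f₁ t₀)⁻¹ = -(1 / deriv f₁ t₀) := by
    rw [one_div]; ring
  rw [this] at Tall
  exact Tall.congr' heq
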